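/- Let B be the lower-triangular matrix with B_{nm} = (n+m)!/(m!(n-m)!) for m ≤ n and 0 otherwise, and Γ_{nm} = 1/(n-m)! for m ≤ n. Then B Γ* = B*, where (M*)_{jk} = (-1)^{j+k} M_{jk}; equivalently, for all 0 ≤ m ≤ n: ∑_{k=m}^n (-1)^{k+m} (n+k)!/((k-m)! k! (n-k)!) = (-1)^{n+m} (n+m)!/(m!(n-m)!). -/
import Mathlib

open Finset

lemma key_sum (b : ℕ) : ∀ d, d ≤ b → ∀ a : ℕ,
    ∑ k ∈ range (d+1), (-1:ℚ)^k * (d.choose k) * ((a+k).choose b)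
      = (-1:ℚ)^d * (a.choose (b - d)) := by
  intro d
  induction d with
  | zero => intro _ a; simp
  | succ d ih =>
    intro hdb a
    have hS := ih (Nat.le_of_succ_le hdb)
    rw [Finset.sum_range_succ']
    have hsplit : ∀ i ∈ range (d+1),
        (-1:ℚ)^(i+1) * (((d+1).choose (i+1) : ℕ)) * (((a+(i+1)).choose b : ℕ))
        = -((-1:ℚ)^i * (d.choose i) * (((a+1)+i).choose b))
          + ((-1:ℚ)^(i+1) * (d.choose (i+1)) * ((a+(i+1)).choose b)) := by
      intro i _
      rw [Nat.choose_succ_succ]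
      have : a + (i+1) = (a+1) + i := by ring
      rw [this]
      push_cast
      ring
    rw [Finset.sum_congr rfl hsplit, Finset.sum_add_distrib]
    have h2 : ∑ i ∈ range (d+1), -((-1:ℚ)^i * (d.choose i) * (((a+1)+i).choose b))
        = -((-1:ℚ)^d * ((a+1).choose (b - d))) := by
      rw [Finset.sum_neg_distrib, hS (a+1)]
    have h3 : ∑ i ∈ range (d+1), (-1:ℚ)^(i+1) * (d.choose (i+1)) * ((a+(i+1)).choose b)
        = (-1:ℚ)^d * (a.choose (b - d)) - ((a.choose b : ℕ) : ℚ) := by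
      have := Finset.sum_range_succ' (fun k => (-1:ℚ)^k * (d.choose k) * ((a+k).choose b)) (d+1)
      have hlast : ∑ k ∈ range (d+1+1), (-1:ℚ)^k * (d.choose k) * ((a+k).choose b)
          = (-1:ℚ)^d * (a.choose (b - d)) := by
        rw [Finset.sum_range_succ, hS a, Nat.choose_succ_self]
        simp
      rw [hlast] at this
      simp only [pow_zero, Nat.choose_zero_right, Nat.cast_one, one_mul, add_zero] at this
      linarith [this]
    rw [h2, h3]
    have hpas : (a+1).choose (b - d) = a.choose (b - (d+1)) + a.choose (b - d) := by
      have hb : b - d = (b - (d+1)) + 1 := by omega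
      rw [hb, Nat.choose_succ_succ]
    rw [hpas]
    push_cast [Nat.choose_zero_right]
    ring

lemma key_rat (n m : ℕ) (h : m ≤ n) :
    (∑ k ∈ Finset.Icc m n,
        (-1 : ℚ) ^ (k + m) * ((n + k).factorial : ℚ) /
          (((k - m).factorial : ℚ) * (k.factorial : ℚ) * ((n - k).factorial : ℚ)))
      = (-1 : ℚ) ^ (n + m) * ((n + m).factorial : ℚ) /
          ((m.factorial : ℚ) * ((n - m).factorial : ℚ)) := by
  rw [← Finset.Ico_add_one_right_eq_Icc, Finset.sum_Ico_eq_sum_range]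
  have hr : n + 1 - m = (n - m) + 1 := by omega
  rw [hr]
  have hterm : ∀ i ∈ range ((n-m)+1),
      (-1 : ℚ) ^ ((m+i) + m) * ((n + (m+i)).factorial : ℚ) /
        ((((m+i) - m).factorial : ℚ) * ((m+i).factorial : ℚ) * ((n - (m+i)).factorial : ℚ))
      = ((-1:ℚ)^i * ((n-m).choose i) * (((n+m)+i).choose n)) *
          ((n.factorial : ℚ) / ((n - m).factorial : ℚ)) := by
    intro i hi
    have hi' : i ≤ n - m := by simpa [Nat.lt_succ_iff] using hi
    have e1 : (m+i) - m = i := by omega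
    have e2 : n - (m+i) = n - m - i := by omega
    have e3 : n + (m+i) = (n+m)+i := by ring
    rw [e1, e2, e3]
    have hsign : (-1:ℚ)^((m+i)+m) = (-1:ℚ)^i := by
      rw [show (m+i)+m = i + 2*m by ring, pow_add, pow_mul]
      norm_num
    rw [hsign]
    have h1 : (n-m).choose i * i.factorial * (n-m-i).factorial = (n-m).factorial :=
      Nat.choose_mul_factorial_mul_factorial hi'
    have h2 : ((n+m)+i).choose n * n.factorial * (m+i).factorial = ((n+m)+i).factorial := by
      have := Nat.choose_mul_factorial_mul_factorial (show n ≤ (n+m)+i by omega)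
      rwa [show (n+m)+i - n = m+i by omega] at this
    have f1 : ((n-m).factorial : ℚ) ≠ 0 := Nat.cast_ne_zero.2 (Nat.factorial_ne_zero _)
    have f2 : (i.factorial : ℚ) ≠ 0 := Nat.cast_ne_zero.2 (Nat.factorial_ne_zero _)
    have f3 : ((m+i).factorial : ℚ) ≠ 0 := Nat.cast_ne_zero.2 (Nat.factorial_ne_zero _)
    have f4 : ((n-m-i).factorial : ℚ) ≠ 0 := Nat.cast_ne_zero.2 (Nat.factorial_ne_zero _)
    have h1' : ((n-m).choose i : ℚ) * i.factorial * (n-m-i).factorial = (n-m).factorial := by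
      exact_mod_cast congrArg (Nat.cast : ℕ → ℚ) h1
    have h2' : (((n+m)+i).choose n : ℚ) * n.factorial * (m+i).factorial = ((n+m)+i).factorial := by
      exact_mod_cast congrArg (Nat.cast : ℕ → ℚ) h2
    field_simp
    rw [← h1', ← h2']
    ring
  rw [Finset.sum_congr rfl hterm, ← Finset.sum_mul, key_sum n (n-m) (by omega) (n+m)]
  rw [show n - (n-m) = m by omega]
  have hsign : (-1:ℚ)^(n-m) = (-1:ℚ)^(n+m) := by
    rw [show n+m = (n-m) + 2*m by omega, pow_add, pow_mul]
    norm_num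
  have h4 : (n+m).choose m * m.factorial * n.factorial = (n+m).factorial := by
    have := Nat.choose_mul_factorial_mul_factorial (show m ≤ n+m by omega)
    rwa [show n+m - m = n by omega] at this
  have h4' : ((n+m).choose m : ℚ) * m.factorial * n.factorial = (n+m).factorial := by
    exact_mod_cast congrArg (Nat.cast : ℕ → ℚ) h4
  have f1 : ((n-m).factorial : ℚ) ≠ 0 := Nat.cast_ne_zero.2 (Nat.factorial_ne_zero _)
  have f2 : (m.factorial : ℚ) ≠ 0 := Nat.cast_ne_zero.2 (Nat.factorial_ne_zero _)
  have f3 : (n.factorial : ℚ) ≠ 0 := Nat.cast_ne_zero.2 (Nat.factorial_ne_zero _)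
  rw [hsign]
  field_simp
  rw [← h4']
  ring


/-- `B Γ* = B*`, equivalently for all `0 ≤ m ≤ n`,
`∑_{k=m}^n (-1)^{k+m} (n+k)!/((k-m)! k! (n-k)!) = (-1)^{n+m} (n+m)!/(m!(n-m)!)`. -/
theorem stmt_12 (N : ℕ)
    (B Γ Γstar Bstar : Matrix (Fin (N + 1)) (Fin (N + 1)) ℚ)
    (hB : ∀ n m : Fin (N + 1), B n m =
      if (m : ℕ) ≤ (n : ℕ) then
        (((n : ℕ) + (m : ℕ)).factorial : ℚ) /
          (((m : ℕ).factorial : ℚ) * (((n : ℕ) - (m : ℕ)).factorial : ℚ))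
      else 0)
    (hΓ : ∀ n m : Fin (N + 1), Γ n m =
      if (m : ℕ) ≤ (n : ℕ) then 1 / ((((n : ℕ) - (m : ℕ)).factorial : ℚ)) else 0)
    (hΓstar : ∀ n m : Fin (N + 1), Γstar n m = (-1 : ℚ) ^ ((n : ℕ) + (m : ℕ)) * Γ n m)
    (hBstar : ∀ n m : Fin (N + 1), Bstar n m = (-1 : ℚ) ^ ((n : ℕ) + (m : ℕ)) * B n m) :
    B * Γstar = Bstar ∧
    ∀ n m : ℕ, m ≤ n →
      (∑ k ∈ Finset.Icc m n,
        (-1 : ℚ) ^ (k + m) * ((n + k).factorial : ℚ) /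
          (((k - m).factorial : ℚ) * (k.factorial : ℚ) * ((n - k).factorial : ℚ)))
        = (-1 : ℚ) ^ (n + m) * ((n + m).factorial : ℚ) /
            ((m.factorial : ℚ) * ((n - m).factorial : ℚ)) := by
  constructor
  · ext n m
    rw [Matrix.mul_apply, hBstar, hB]
    have hterm : ∀ k : Fin (N+1), B n k * Γstar k m =
        if (m:ℕ) ≤ (k:ℕ) ∧ (k:ℕ) ≤ (n:ℕ) then
          (-1 : ℚ) ^ ((k:ℕ) + (m:ℕ)) * (((n:ℕ) + (k:ℕ)).factorial : ℚ) /
            ((((k:ℕ) - (m:ℕ)).factorial : ℚ) * (((k:ℕ)).factorial : ℚ) *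
              (((n:ℕ) - (k:ℕ)).factorial : ℚ))
        else 0 := by
      intro k
      rw [hB, hΓstar, hΓ]
      by_cases h1 : (k:ℕ) ≤ (n:ℕ) <;> by_cases h2 : (m:ℕ) ≤ (k:ℕ) <;>
        simp [h1, h2] <;> ring
    rw [Finset.sum_congr rfl (fun k _ => hterm k)]
    have hrange : ∑ k : Fin (N+1),
        (if (m:ℕ) ≤ (k:ℕ) ∧ (k:ℕ) ≤ (n:ℕ) then
          (-1 : ℚ) ^ ((k:ℕ) + (m:ℕ)) * (((n:ℕ) + (k:ℕ)).factorial : ℚ) /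
            ((((k:ℕ) - (m:ℕ)).factorial : ℚ) * (((k:ℕ)).factorial : ℚ) *
              (((n:ℕ) - (k:ℕ)).factorial : ℚ))
        else 0)
        = ∑ k ∈ Finset.Icc (m:ℕ) (n:ℕ),
          (-1 : ℚ) ^ (k + (m:ℕ)) * (((n:ℕ) + k).factorial : ℚ) /
            (((k - (m:ℕ)).factorial : ℚ) * ((k).factorial : ℚ) *
              (((n:ℕ) - k).factorial : ℚ)) := by
      rw [Fin.sum_univ_eq_sum_range (fun k =>
        (if (m:ℕ) ≤ k ∧ k ≤ (n:ℕ) then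
          (-1 : ℚ) ^ (k + (m:ℕ)) * (((n:ℕ) + k).factorial : ℚ) /
            (((k - (m:ℕ)).factorial : ℚ) * ((k).factorial : ℚ) *
              (((n:ℕ) - k).factorial : ℚ))
        else 0))]
      rw [Finset.sum_ite, Finset.sum_const_zero, add_zero]
      congr 1
      ext k
      simp only [Finset.mem_filter, Finset.mem_range, Finset.mem_Icc, Nat.lt_succ_iff]
      have := n.isLt
      omega
    rw [hrange]
    by_cases hmn : (m:ℕ) ≤ (n:ℕ)
    · rw [if_pos hmn, key_rat _ _ hmn, mul_div_assoc]
    · rw [if_neg hmn, mul_zero, Finset.Icc_eq_empty (by omega), Finset.sum_empty]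
  · intro n m h
    exact key_rat n m h
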